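/- For multisets of nonnegative reals with finite ℓ¹-mass, the transport distance equals the ℓ¹-distance of nonincreasing enumerations: if (sⱼ) and (tⱼ) are the nonincreasing enumerations of S and T (padded with zeros), then d(S,T) = Σⱼ |sⱼ − tⱼ|. -/

import Mathlib

open Set MeasureTheory
open scoped ENNReal

/-- Two sequences enumerate the same rigged set (countable multiset of reals
with `0` adjoined with infinite multiplicity, so padding with zeros is allowed)
iff every nonzero real occurs in both with the same (finite) multiplicity. -/
def SameRigged (s t : ℕ → ℝ) : Prop :=
  ∀ x : ℝ, x ≠ 0 → {j | s j = x}.ncard = {j | t j = x}.ncard ∧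
    ({j | s j = x}.Finite ↔ {j | t j = x}.Finite)

/-- The transport distance between the rigged sets enumerated by `s` and `t`:
the infimum over all pairs of enumerations of the ℓ¹-distance `∑ⱼ |sⱼ' − tⱼ'|`. -/
noncomputable def rdist (s t : ℕ → ℝ) : ℝ :=
  sInf { c : ℝ | ∃ s' t' : ℕ → ℝ, SameRigged s s' ∧ SameRigged t t' ∧
    HasSum (fun j => |s' j - t' j|) c }

/-! ### Auxiliary counting function -/

/-- The "count" of a set of naturals, as an extended nonnegative real. -/
noncomputable def cnt (S : Set ℕ) : ℝ≥0∞ := ∑' j, S.indicator 1 j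

lemma cnt_mono {S T : Set ℕ} (h : S ⊆ T) : cnt S ≤ cnt T :=
  ENNReal.tsum_le_tsum fun j =>
    Set.indicator_le_indicator_of_subset h (fun _ => zero_le) j

lemma cnt_union {S T : Set ℕ} (h : Disjoint S T) : cnt (S ∪ T) = cnt S + cnt T := by
  unfold cnt
  rw [← ENNReal.tsum_add]
  refine tsum_congr fun j => ?_
  rw [Set.indicator_union_of_disjoint h]

lemma cnt_empty : cnt (∅ : Set ℕ) = 0 := by simp [cnt]

lemma cnt_finite {S : Set ℕ} (h : S.Finite) : cnt S = S.ncard := by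
  unfold cnt
  rw [tsum_eq_sum (s := h.toFinset)
    (fun j hj => Set.indicator_of_notMem (by simpa using hj) _)]
  rw [Set.ncard_eq_toFinset_card S h]
  have hone : ∀ j ∈ h.toFinset, S.indicator (1 : ℕ → ℝ≥0∞) j = 1 := fun j hj => by
    rw [Set.indicator_of_mem (h.mem_toFinset.1 hj)]; rfl
  rw [Finset.sum_congr rfl hone, Finset.sum_const, nsmul_eq_mul, mul_one]

lemma cnt_ne_top {S : Set ℕ} (h : S.Finite) : cnt S ≠ ⊤ := by
  rw [cnt_finite h]; exact ENNReal.natCast_ne_top _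

/-- biUnion over a finset of pairwise disjoint sets -/
lemma cnt_biUnion (G : Finset ℝ) (f : ℝ → Set ℕ)
    (hdisj : ∀ x ∈ G, ∀ y ∈ G, x ≠ y → Disjoint (f x) (f y)) :
    cnt (⋃ x ∈ G, f x) = ∑ x ∈ G, cnt (f x) := by
  induction G using Finset.induction_on with
  | empty => simp [cnt_empty]
  | @insert a G ha ih =>
    rw [Finset.set_biUnion_insert, Finset.sum_insert ha, cnt_union, ih]
    · intro x hx y hy hxy
      exact hdisj x (Finset.mem_insert_of_mem hx) y (Finset.mem_insert_of_mem hy) hxy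
    · refine Set.disjoint_iUnion₂_right.2 fun x hx => ?_
      exact hdisj a (Finset.mem_insert_self a G) x (Finset.mem_insert_of_mem hx)
        (fun h => ha (h ▸ hx))

lemma finite_lt {s : ℕ → ℝ} (hsum : Summable s) {l : ℝ} (hl : 0 < l) :
    {j | l < s j}.Finite := by
  have hev : ∀ᶠ j in Filter.atTop, s j < l :=
    hsum.tendsto_atTop_zero.eventually (Filter.Tendsto.eventually_lt_const hl
      Filter.tendsto_id) |>.mono (fun j hj => hj)
  obtain ⟨N, hN⟩ := Filter.eventually_atTop.1 hev
  refine (Set.finite_Iio N).subset fun j hj => ?_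
  by_contra hjN
  exact absurd (hN j (le_of_not_gt hjN)) (not_lt.2 (le_of_lt hj))

/-- For `λ > 0`, the count of entries above `λ` is the same for `SameRigged` sequences. -/
lemma cnt_lt_eq {s s' : ℕ → ℝ} (hsum : Summable s) (hr : SameRigged s s')
    {l : ℝ} (hl : 0 < l) : cnt {j | l < s j} = cnt {j | l < s' j} := by
  set A := {j | l < s j} with hA
  have hAfin : A.Finite := finite_lt hsum hl
  have hfib : ∀ x : ℝ, l < x → {j | s j = x}.Finite := fun x hx =>
    hAfin.subset fun j hj => by
      simp only [Set.mem_setOf_eq] at hj ⊢; rw [hA]; simp [hj, hx]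
  have hF : (s '' A).Finite := hAfin.image s
  have hFl : ∀ x ∈ s '' A, l < x := by rintro x ⟨j, hj, rfl⟩; exact hj
  have hAeq : A = ⋃ x ∈ hF.toFinset, {j | s j = x} := by
    ext j
    simp only [Set.mem_iUnion, Set.Finite.mem_toFinset, Set.mem_setOf_eq]
    constructor
    · intro hj; exact ⟨s j, ⟨j, hj, rfl⟩, rfl⟩
    · rintro ⟨x, hx, rfl⟩; exact hFl _ hx
  have hA'eq : {j | l < s' j} = ⋃ x ∈ hF.toFinset, {j | s' j = x} := by
    ext j
    simp only [Set.mem_iUnion, Set.Finite.mem_toFinset, Set.mem_setOf_eq]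
    constructor
    · intro hj
      refine ⟨s' j, ?_, rfl⟩
      have hx0 : s' j ≠ 0 := (hl.trans hj).ne'
      obtain ⟨hcard, hfin⟩ := hr _ hx0
      have h1 : {i | s i = s' j}.Finite := hfib _ hj
      have h2 : {i | s' i = s' j}.Finite := hfin.1 h1
      have hpos : 0 < {i | s' i = s' j}.ncard := (Set.ncard_pos h2).2 ⟨j, rfl⟩
      have : 0 < {i | s i = s' j}.ncard := hcard ▸ hpos
      obtain ⟨i, hi⟩ := (Set.ncard_pos h1).1 this
      have hi' : s i = s' j := hi
      exact ⟨i, by rw [Set.mem_setOf_eq, hi']; exact hj, hi'⟩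
    · rintro ⟨x, hx, rfl⟩; exact hFl _ hx
  rw [hAeq, hA'eq, cnt_biUnion, cnt_biUnion]
  · refine Finset.sum_congr rfl fun x hx => ?_
    have hxl : l < x := hFl _ (hF.mem_toFinset.1 hx)
    have hx0 : x ≠ 0 := (hl.trans hxl).ne'
    obtain ⟨hcard, hfin⟩ := hr x hx0
    have h1 : {j | s j = x}.Finite := hfib x hxl
    have h2 : {j | s' j = x}.Finite := hfin.1 h1
    rw [cnt_finite h1, cnt_finite h2, hcard]
  · intro x _ y _ hxy
    rw [Set.disjoint_left]
    rintro j (hj : s' j = x) (hj' : s' j = y)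
    exact hxy (hj ▸ hj')
  · intro x _ y _ hxy
    rw [Set.disjoint_left]
    rintro j (hj : s j = x) (hj' : s j = y)
    exact hxy (hj ▸ hj')

lemma lower_nested {A B : Set ℕ} (hA : ∀ i j : ℕ, i ≤ j → j ∈ A → i ∈ A)
    (hB : ∀ i j : ℕ, i ≤ j → j ∈ B → i ∈ B) : A ⊆ B ∨ B ⊆ A := by
  by_cases h : A ⊆ B
  · exact Or.inl h
  · right
    rw [Set.not_subset] at h
    obtain ⟨j, hjA, hjB⟩ := h
    intro i hiB
    rcases le_total i j with hij | hij
    · exact hA i j hij hjA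
    · exact absurd (hB j i hij hiB) hjB

lemma aux_symmdiff {A B A' B' : Set ℕ} (hAfin : A.Finite) (hAB : A ⊆ B)
    (hcA : cnt A = cnt A') (hcB : cnt B = cnt B') :
    cnt ((A \ B) ∪ (B \ A)) ≤ cnt ((A' \ B') ∪ (B' \ A')) := by
  have h1 : A \ B = ∅ := Set.diff_eq_empty.2 hAB
  rw [h1, Set.empty_union]
  have hBA : cnt (B \ A) + cnt A = cnt B := by
    rw [← cnt_union disjoint_sdiff_left, Set.diff_union_of_subset hAB]
  have h2 : cnt B' ≤ cnt (B' \ A') + cnt A' := by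
    calc cnt B' ≤ cnt ((B' \ A') ∪ A') := cnt_mono (Set.subset_diff_union B' A')
    _ = cnt (B' \ A') + cnt A' := cnt_union disjoint_sdiff_left
  have hkey : cnt (B \ A) + cnt A ≤ cnt (B' \ A') + cnt A := by
    rw [hBA, hcB, hcA]; exact h2
  have := (ENNReal.add_le_add_iff_right (cnt_ne_top hAfin)).1 hkey
  exact this.trans (cnt_mono Set.subset_union_right)

lemma mem_Ico_minmax {a b l : ℝ} :
    l ∈ Set.Ico (min a b) (max a b) ↔ ((l < a ∧ ¬ l < b) ∨ (l < b ∧ ¬ l < a)) := by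
  rcases le_total a b with h | h
  · rw [min_eq_left h, max_eq_right h, Set.mem_Ico]
    constructor
    · rintro ⟨h1, h2⟩; exact Or.inr ⟨h2, not_lt.2 h1⟩
    · rintro (⟨h1, h2⟩ | ⟨h1, h2⟩)
      · exact absurd (h1.trans_le h) h2
      · exact ⟨not_lt.1 h2, h1⟩
  · rw [min_eq_right h, max_eq_left h, Set.mem_Ico]
    constructor
    · rintro ⟨h1, h2⟩; exact Or.inl ⟨h2, not_lt.2 h1⟩
    · rintro (⟨h1, h2⟩ | ⟨h1, h2⟩)
      · exact ⟨not_lt.1 h2, h1⟩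
      · exact absurd (h1.trans_le h) h2

lemma pointwise_le {s t s' t' : ℕ → ℝ}
    (hs0 : ∀ j, 0 ≤ s j) (ht0 : ∀ j, 0 ≤ t j)
    (hsa : Antitone s) (hta : Antitone t)
    (hs : Summable s) (ht : Summable t)
    (hrs : SameRigged s s') (hrt : SameRigged t t')
    {l : ℝ} (hl : l ≠ 0) :
    cnt {j | l ∈ Set.Ico (min (s j) (t j)) (max (s j) (t j))} ≤
      cnt {j | l ∈ Set.Ico (min (s' j) (t' j)) (max (s' j) (t' j))} := by
  rcases lt_or_gt_of_ne hl with hneg | hpos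
  · have hempty : {j | l ∈ Set.Ico (min (s j) (t j)) (max (s j) (t j))} = ∅ := by
      ext j
      simp only [Set.mem_setOf_eq, Set.mem_Ico, Set.mem_empty_iff_false, iff_false, not_and]
      intro hmin
      exact absurd (hneg.trans_le (le_trans (le_min (hs0 j) (ht0 j)) hmin)) (lt_irrefl l)
    rw [hempty, cnt_empty]
    exact zero_le
  · have hDst : {j | l ∈ Set.Ico (min (s j) (t j)) (max (s j) (t j))} =
        ({j | l < s j} \ {j | l < t j}) ∪ ({j | l < t j} \ {j | l < s j}) := by
      ext j
      simp only [Set.mem_setOf_eq, Set.mem_union, Set.mem_diff, mem_Ico_minmax]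
    have hDst' : {j | l ∈ Set.Ico (min (s' j) (t' j)) (max (s' j) (t' j))} =
        ({j | l < s' j} \ {j | l < t' j}) ∪ ({j | l < t' j} \ {j | l < s' j}) := by
      ext j
      simp only [Set.mem_setOf_eq, Set.mem_union, Set.mem_diff, mem_Ico_minmax]
    set A := {j | l < s j}
    set B := {j | l < t j}
    set A' := {j | l < s' j}
    set B' := {j | l < t' j}
    rw [hDst, hDst']
    have hcA : cnt A = cnt A' := cnt_lt_eq hs hrs hpos
    have hcB : cnt B = cnt B' := cnt_lt_eq ht hrt hpos
    have hAl : ∀ i j : ℕ, i ≤ j → j ∈ A → i ∈ A := fun i j hij hj =>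
      lt_of_lt_of_le hj (hsa hij)
    have hBl : ∀ i j : ℕ, i ≤ j → j ∈ B → i ∈ B := fun i j hij hj =>
      lt_of_lt_of_le hj (hta hij)
    rcases lower_nested hAl hBl with hsub | hsub
    · exact aux_symmdiff (finite_lt hs hpos) hsub hcA hcB
    · rw [Set.union_comm (A \ B), Set.union_comm (A' \ B')]
      exact aux_symmdiff (finite_lt ht hpos) hsub hcB hcA

lemma key_le {s t s' t' : ℕ → ℝ}
    (hs0 : ∀ j, 0 ≤ s j) (ht0 : ∀ j, 0 ≤ t j)
    (hsa : Antitone s) (hta : Antitone t)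
    (hs : Summable s) (ht : Summable t)
    (hrs : SameRigged s s') (hrt : SameRigged t t') :
    (∑' j, ENNReal.ofReal |s j - t j|) ≤ ∑' j, ENNReal.ofReal |s' j - t' j| := by
  have rep : ∀ u v : ℕ → ℝ, (∑' j, ENNReal.ofReal |u j - v j|)
      = ∫⁻ l, ∑' j, (Set.Ico (min (u j) (v j)) (max (u j) (v j))).indicator 1 l := by
    intro u v
    rw [lintegral_tsum (fun j => (measurable_one.indicator measurableSet_Ico).aemeasurable)]
    refine tsum_congr fun j => ?_
    rw [lintegral_indicator_one measurableSet_Ico, Real.volume_Ico, max_sub_min_eq_abs, abs_sub_comm]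
  rw [rep s t, rep s' t']
  refine lintegral_mono_ae ?_
  have h0 : ∀ᵐ l : ℝ, l ≠ 0 := by
    rw [ae_iff]
    have : {l : ℝ | ¬ l ≠ 0} = {0} := by ext l; simp
    rw [this]
    exact measure_singleton 0
  filter_upwards [h0] with l hl
  have conv : ∀ u v : ℕ → ℝ,
      (∑' j, (Set.Ico (min (u j) (v j)) (max (u j) (v j))).indicator (1 : ℝ → ℝ≥0∞) l)
        = cnt {j | l ∈ Set.Ico (min (u j) (v j)) (max (u j) (v j))} := by
    intro u v
    refine tsum_congr fun j => ?_
    by_cases h : l ∈ Set.Ico (min (u j) (v j)) (max (u j) (v j))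
    · rw [Set.indicator_of_mem h, Set.indicator_of_mem
        (show j ∈ {i | l ∈ Set.Ico (min (u i) (v i)) (max (u i) (v i))} from h)]
      rfl
    · rw [Set.indicator_of_notMem h, Set.indicator_of_notMem
        (show j ∉ {i | l ∈ Set.Ico (min (u i) (v i)) (max (u i) (v i))} from h)]
  rw [conv s t, conv s' t']
  exact pointwise_le hs0 ht0 hsa hta hs ht hrs hrt hl

/-- for multisets of nonnegative reals with finite ℓ¹-mass, the
transport distance equals the ℓ¹-distance of the nonincreasing enumerations. -/
theorem stmt_9 (s t : ℕ → ℝ)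
    (hs0 : ∀ j, 0 ≤ s j) (ht0 : ∀ j, 0 ≤ t j)
    (hsa : Antitone s) (hta : Antitone t)
    (hs : Summable s) (ht : Summable t) :
    rdist s t = ∑' j, |s j - t j| := by
  have hsummable : Summable (fun j => |s j - t j|) := by
    refine Summable.of_nonneg_of_le (fun j => abs_nonneg _) (fun j => ?_) (hs.add ht)
    rw [sub_eq_add_neg]
    exact (abs_add_le _ _).trans (by
      rw [abs_neg, abs_of_nonneg (hs0 j), abs_of_nonneg (ht0 j)])
  have hrefl : ∀ u : ℕ → ℝ, SameRigged u u := fun u x _ => ⟨rfl, Iff.rfl⟩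
  have hmem : (∑' j, |s j - t j|) ∈ { c : ℝ | ∃ s' t' : ℕ → ℝ, SameRigged s s' ∧
      SameRigged t t' ∧ HasSum (fun j => |s' j - t' j|) c } :=
    ⟨s, t, hrefl s, hrefl t, hsummable.hasSum⟩
  have hlb : ∀ c ∈ { c : ℝ | ∃ s' t' : ℕ → ℝ, SameRigged s s' ∧
      SameRigged t t' ∧ HasSum (fun j => |s' j - t' j|) c },
      (∑' j, |s j - t j|) ≤ c := by
    rintro c ⟨s', t', hrs, hrt, hsum⟩
    have h1 : (∑' j, ENNReal.ofReal |s j - t j|) = ENNReal.ofReal (∑' j, |s j - t j|) :=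
      (ENNReal.ofReal_tsum_of_nonneg (fun j => abs_nonneg _) hsummable).symm
    have h2 : (∑' j, ENNReal.ofReal |s' j - t' j|) = ENNReal.ofReal c := by
      rw [← (ENNReal.ofReal_tsum_of_nonneg (fun j => abs_nonneg _) hsum.summable),
        hsum.tsum_eq]
    have hkey := key_le hs0 ht0 hsa hta hs ht hrs hrt
    rw [h1, h2] at hkey
    have hc0 : 0 ≤ c := hsum.tsum_eq ▸ tsum_nonneg (fun j => abs_nonneg _)
    exact (ENNReal.ofReal_le_ofReal_iff hc0).1 hkey
  exact le_antisymm (csInf_le ⟨_, hlb⟩ hmem) (le_csInf ⟨_, hmem⟩ hlb)
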